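/- Let E and F be real normed vector spaces, let p > 1 and q > 1 be real numbers, and let f : E × F → ℝ be Fréchet differentiable. Suppose there is a constant c₁ > 0 such that for all (u,v) ∈ E × F and all ξ ∈ E, ζ ∈ F: |Df(u,v)(ξ,0)| ≤ c₁·(1 + ‖u‖^p + ‖v‖^{p(q+1)/(p+1)})·‖ξ‖ and |Df(u,v)(0,ζ)| ≤ c₁·(1 + ‖u‖^{q(p+1)/(q+1)} + ‖v‖^q)·‖ζ‖. Then there exists a constant C > 0 such that |f(u,v)| ≤ C·(1 + ‖u‖^{p+1} + ‖v‖^{q+1}) for all (u,v) ∈ E × F. -/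

import Mathlib

open Real

private lemma young_aux {a b p q : ℝ} (ha : 0 ≤ a) (hb : 0 ≤ b) (hp : 1 < p) (hq : 1 < q) :
    a * b ^ (p * (q + 1) / (p + 1)) ≤ a ^ (p + 1) + b ^ (q + 1) := by
  have hp0 : (0:ℝ) < p := by linarith
  have hpq : (p + 1).HolderConjugate ((p + 1) / p) := by
    rw [Real.holderConjugate_iff]
    constructor
    · linarith
    · field_simp
      ring
  have hy := Real.young_inequality_of_nonneg (b := b ^ (p * (q + 1) / (p + 1))) ha (Real.rpow_nonneg hb _) hpq
  have key : (b ^ (p * (q + 1) / (p + 1))) ^ ((p + 1) / p) = b ^ (q + 1) := by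
    rw [← Real.rpow_mul hb]
    congr 1
    field_simp
  rw [key] at hy
  have h1 : a ^ (p + 1) / (p + 1) ≤ a ^ (p + 1) := by
    apply div_le_self (Real.rpow_nonneg ha _); linarith
  have h2 : b ^ (q + 1) / ((p + 1) / p) ≤ b ^ (q + 1) := by
    apply div_le_self (Real.rpow_nonneg hb _)
    rw [le_div_iff₀ hp0]; linarith
  linarith

private lemma le_one_add_rpow {a p : ℝ} (ha : 0 ≤ a) (hp : 1 ≤ p) : a ≤ 1 + a ^ p := by
  rcases le_or_gt a 1 with h | h
  · have := Real.rpow_nonneg ha p; linarith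
  · calc a = a ^ (1:ℝ) := (Real.rpow_one a).symm
    _ ≤ a ^ p := Real.rpow_le_rpow_of_exponent_le h.le hp
    _ ≤ 1 + a ^ p := by linarith

private lemma rpow_mul_self {a p : ℝ} (ha : 0 ≤ a) (hp : 0 < p) : a ^ p * a = a ^ (p + 1) := by
  rcases eq_or_ne a 0 with rfl | h
  · rw [Real.zero_rpow hp.ne', Real.zero_rpow (by linarith), zero_mul]
  · rw [Real.rpow_add_one h]

/-- The growth conditions (H2) on the fiber derivatives imply the superquadratic
growth bound (2.4.2): `|f(u,v)| ≤ C (1 + ‖u‖^(p+1) + ‖v‖^(q+1))`. -/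
theorem growth_bound_of_derivative_growth
    {E F : Type*} [NormedAddCommGroup E] [NormedSpace ℝ E]
    [NormedAddCommGroup F] [NormedSpace ℝ F]
    (p q : ℝ) (hp : 1 < p) (hq : 1 < q)
    (f : E × F → ℝ) (hf : Differentiable ℝ f)
    (c₁ : ℝ) (hc₁ : 0 < c₁)
    (h1 : ∀ (u : E) (v : F) (ξ : E),
      |fderiv ℝ f (u, v) (ξ, 0)| ≤
        c₁ * (1 + ‖u‖ ^ p + ‖v‖ ^ (p * (q + 1) / (p + 1))) * ‖ξ‖)
    (h2 : ∀ (u : E) (v : F) (ζ : F),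
      |fderiv ℝ f (u, v) (0, ζ)| ≤
        c₁ * (1 + ‖u‖ ^ (q * (p + 1) / (q + 1)) + ‖v‖ ^ q) * ‖ζ‖) :
    ∃ C : ℝ, 0 < C ∧ ∀ (u : E) (v : F),
      |f (u, v)| ≤ C * (1 + ‖u‖ ^ (p + 1) + ‖v‖ ^ (q + 1)) := by
  set r := p * (q + 1) / (p + 1) with hr
  refine ⟨5 * c₁ + |f (0, 0)| + 1, by positivity, fun u v => ?_⟩
  set U := ‖u‖ ^ (p + 1) with hU
  set V := ‖v‖ ^ (q + 1) with hV
  have hUnn : 0 ≤ U := Real.rpow_nonneg (norm_nonneg _) _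
  have hVnn : 0 ≤ V := Real.rpow_nonneg (norm_nonneg _) _
  -- Step 1: bound |f (u,v) - f (0,v)|
  have step1 : |f (u, v) - f (0, v)| ≤ c₁ * (1 + ‖u‖ ^ p + ‖v‖ ^ r) * ‖u‖ := by
    have hconv : Convex ℝ (Metric.closedBall (0:E) ‖u‖) := convex_closedBall _ _
    have key := hconv.norm_image_sub_le_of_norm_fderiv_le
      (f := fun w : E => f (w, v)) (C := c₁ * (1 + ‖u‖ ^ p + ‖v‖ ^ r))
      (fun x _ => (hf (x, v)).comp x ((differentiable_id.prodMk (differentiable_const v)) x))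
      (fun x hx => by
        have hder : HasFDerivAt (fun w : E => f (w, v))
            ((fderiv ℝ f (x, v)).comp (ContinuousLinearMap.inl ℝ E F)) x :=
          (hf (x, v)).hasFDerivAt.comp x (hasFDerivAt_prodMk_left x v)
        rw [hder.fderiv]
        apply ContinuousLinearMap.opNorm_le_bound
        · positivity
        · intro ξ
          simp only [ContinuousLinearMap.coe_comp', Function.comp_apply,
            ContinuousLinearMap.inl_apply]
          rw [Real.norm_eq_abs]
          refine le_trans (h1 x v ξ) ?_
          have hxle : ‖x‖ ≤ ‖u‖ := by simpa using hx
          have : ‖x‖ ^ p ≤ ‖u‖ ^ p :=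
            Real.rpow_le_rpow (norm_nonneg _) hxle (by linarith)
          have h0 : 0 ≤ ‖v‖ ^ r := Real.rpow_nonneg (norm_nonneg _) _
          have := mul_le_mul_of_nonneg_right (mul_le_mul_of_nonneg_left
            (show 1 + ‖x‖ ^ p + ‖v‖ ^ r ≤ 1 + ‖u‖ ^ p + ‖v‖ ^ r by linarith) hc₁.le)
            (norm_nonneg ξ)
          linarith)
      (show (0:E) ∈ Metric.closedBall (0:E) ‖u‖ by simp)
      (show u ∈ Metric.closedBall (0:E) ‖u‖ by simp)
    simpa [Real.norm_eq_abs] using key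
  -- Step 2: bound |f (0,v) - f (0,0)|
  have hs0 : ‖(0:E)‖ ^ (q * (p + 1) / (q + 1)) = 0 := by
    rw [norm_zero, Real.zero_rpow]
    positivity
  have step2 : |f (0, v) - f (0, 0)| ≤ c₁ * (1 + ‖v‖ ^ q) * ‖v‖ := by
    have hconv : Convex ℝ (Metric.closedBall (0:F) ‖v‖) := convex_closedBall _ _
    have key := hconv.norm_image_sub_le_of_norm_fderiv_le
      (f := fun w : F => f (0, w)) (C := c₁ * (1 + ‖v‖ ^ q))
      (fun x _ => (hf ((0:E), x)).comp x (((differentiable_const (0:E)).prodMk differentiable_id) x))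
      (fun x hx => by
        have hder : HasFDerivAt (fun w : F => f (0, w))
            ((fderiv ℝ f (0, x)).comp (ContinuousLinearMap.inr ℝ E F)) x :=
          (hf ((0:E), x)).hasFDerivAt.comp x (hasFDerivAt_prodMk_right 0 x)
        rw [hder.fderiv]
        apply ContinuousLinearMap.opNorm_le_bound
        · positivity
        · intro ζ
          simp only [ContinuousLinearMap.coe_comp', Function.comp_apply,
            ContinuousLinearMap.inr_apply]
          rw [Real.norm_eq_abs]
          refine le_trans (h2 0 x ζ) ?_
          have hxle : ‖x‖ ≤ ‖v‖ := by simpa using hx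
          have : ‖x‖ ^ q ≤ ‖v‖ ^ q :=
            Real.rpow_le_rpow (norm_nonneg _) hxle (by linarith)
          rw [hs0]
          have := mul_le_mul_of_nonneg_right (mul_le_mul_of_nonneg_left
            (show 1 + 0 + ‖x‖ ^ q ≤ 1 + ‖v‖ ^ q by linarith) hc₁.le)
            (norm_nonneg ζ)
          linarith)
      (show (0:F) ∈ Metric.closedBall (0:F) ‖v‖ by simp)
      (show v ∈ Metric.closedBall (0:F) ‖v‖ by simp)
    simpa [Real.norm_eq_abs] using key
  -- Combine
  have htri : |f (u, v)| ≤ |f (u, v) - f (0, v)| + |f (0, v) - f (0, 0)| + |f (0, 0)| := by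
    calc |f (u, v)| = |(f (u, v) - f (0, v)) + (f (0, v) - f (0, 0)) + f (0, 0)| := by ring_nf
    _ ≤ _ := by
        refine le_trans (abs_add_le _ _) ?_
        exact add_le_add (abs_add_le _ _) le_rfl
  -- elementary bounds
  have e1 : ‖u‖ ≤ 1 + U := le_one_add_rpow (norm_nonneg u) (by linarith)
  have e2 : ‖u‖ ^ p * ‖u‖ = U := rpow_mul_self (norm_nonneg u) (by linarith)
  have e3 : ‖v‖ ^ r * ‖u‖ ≤ U + V := by
    rw [mul_comm]
    exact young_aux (norm_nonneg u) (norm_nonneg v) hp hq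
  have e4 : ‖v‖ ≤ 1 + V := le_one_add_rpow (norm_nonneg v) (by linarith)
  have e5 : ‖v‖ ^ q * ‖v‖ = V := rpow_mul_self (norm_nonneg v) (by linarith)
  have hA : |f (u, v) - f (0, v)| ≤ c₁ * (1 + 2 * U + V + (U + V)) := by
    refine le_trans step1 ?_
    have expand : c₁ * (1 + ‖u‖ ^ p + ‖v‖ ^ r) * ‖u‖
        = c₁ * (‖u‖ + ‖u‖ ^ p * ‖u‖ + ‖v‖ ^ r * ‖u‖) := by ring
    rw [expand, e2]
    nlinarith
  have hB : |f (0, v) - f (0, 0)| ≤ c₁ * (1 + 2 * V) := by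
    refine le_trans step2 ?_
    have expand : c₁ * (1 + ‖v‖ ^ q) * ‖v‖ = c₁ * (‖v‖ + ‖v‖ ^ q * ‖v‖) := by ring
    rw [expand, e5]
    nlinarith
  have hfle : |f (0, 0)| ≤ |f (0, 0)| * (1 + U + V) := by
    nlinarith [abs_nonneg (f (0, 0))]
  nlinarith [abs_nonneg (f (u,v))]
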